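/- arXiv:1702.06684 — 2 statements merged into one kernel-verified Lean document; each statement's English description precedes it below -/
import Mathlib

section
/- If n is even and w is an odd word of rank n (f_w odd), then the only word w' of rank n+1 covering w with f_{w'} odd is 1w. If n is odd and w is an odd word of rank n, then w = 1v for a unique odd word v of rank n−1, and the words of rank n+1 covering w with odd f are exactly 11v and 2v. -/
/-- The list of words covered by `w` in the Young-Fibonacci lattice. -/
def preds : List ℕ → List (List ℕ)
  | [] => []
  | 1 :: t => [t]
  | 2 :: t => (1 :: t) :: (preds t).map (fun u => 2 :: u)
  | _ :: _ => []

theorem preds_sum_lt : ∀ (w u : List ℕ), u ∈ preds w → u.sum < w.sum := by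
  intro w
  induction w using preds.induct with
  | case1 => intro u h; simp [preds] at h
  | case2 t => intro u h; simp [preds] at h; subst h; simp
  | case3 t ih =>
      intro u h
      simp [preds] at h
      rcases h with h | ⟨v, hv, rfl⟩
      · subst h; simp
      · have := ih v hv; simpa using by omega
  | case4 x t h1 h2 => intro u h; simp [preds] at h

/-- The number of saturated chains from the empty word to `w`. -/
def f (w : List ℕ) : ℕ :=
  if w = [] then 1
  else ((preds w).attach.map (fun u => f u.1)).sum
termination_by w.sum
decreasing_by exact preds_sum_lt w u.1 u.2

/-- The product formula. -/
def fprod (w : List ℕ) : ℕ :=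
  ∏ i ∈ Finset.univ.filter (fun i : Fin w.length => w.get i = 2), ((w.drop i.1).sum - 1)

lemma preds_sum : ∀ (w u : List ℕ), u ∈ preds w → u.sum + 1 = w.sum := by
  intro w
  induction w using preds.induct with
  | case1 => intro u h; simp [preds] at h
  | case2 t => intro u h; simp [preds] at h; subst h; simp; omega
  | case3 t ih =>
      intro u h
      simp [preds] at h
      rcases h with h | ⟨v, hv, rfl⟩
      · subst h; simp; omega
      · have := ih v hv; simp at this ⊢; omega
  | case4 x t h1 h2 => intro u h; simp [preds] at h

lemma f_eq (w : List ℕ) (h : w ≠ []) : f w = ((preds w).map f).sum := by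
  rw [f, if_neg h, List.attach_map_val]

lemma f_one (t : List ℕ) : f (1 :: t) = f t := by
  rw [f_eq _ (by simp)]; simp [preds]

lemma f_two (t : List ℕ) : f (2 :: t) = f t + ((preds t).map (fun u => f (2 :: u))).sum := by
  rw [f_eq _ (by simp)]
  simp [preds, List.map_map, Function.comp_def, f_one]

lemma parity2 : ∀ n : ℕ, ∀ t : List ℕ, t.sum = n →
    (f (2 :: t) : ZMod 2) = if Even n then (f t : ZMod 2) else 0 := by
  intro n
  induction n using Nat.strong_induction_on with
  | _ n ih =>
    intro t ht
    have key : (f (2 :: t) : ZMod 2)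
        = (f t : ZMod 2) + (((preds t).map (fun u => (f (2 :: u) : ZMod 2))).sum) := by
      rw [f_two]; push_cast [List.map_map]; rfl
    by_cases hn : Even n
    · rw [if_pos hn, key]
      have : ((preds t).map (fun u => (f (2 :: u) : ZMod 2))).sum = 0 := by
        rw [List.map_congr_left (g := fun _ => (0 : ZMod 2))]
        · simp
        · intro u hu
          have hs := preds_sum t u hu
          have hlt : u.sum < n := by omega
          have := ih u.sum hlt u rfl
          rw [if_neg (by rw [Nat.even_iff] at hn ⊢; omega)] at this
          exact this
      rw [this, add_zero]
    · rw [if_neg hn, key]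
      have htne : t ≠ [] := by rintro rfl; simp at ht; exact hn (ht ▸ Even.zero)
      have : ((preds t).map (fun u => (f (2 :: u) : ZMod 2))).sum
          = ((preds t).map (fun u => (f u : ZMod 2))).sum := by
        apply congrArg
        apply List.map_congr_left
        intro u hu
        have hs := preds_sum t u hu
        have hlt : u.sum < n := by omega
        have := ih u.sum hlt u rfl
        rw [if_pos (by rw [Nat.even_iff] at hn ⊢; omega)] at this
        exact this
      rw [this]
      have : ((preds t).map (fun u => (f u : ZMod 2))).sum = (f t : ZMod 2) := by
        rw [f_eq t htne]; push_cast [List.map_map]; rfl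
      rw [this]
      have h2 : ∀ x : ZMod 2, x + x = 0 := by decide
      exact h2 _

lemma odd_iff_cast (m : ℕ) : Odd m ↔ (m : ZMod 2) ≠ 0 := by
  rw [Ne, ZMod.natCast_eq_zero_iff, ← Nat.not_even_iff_odd]; simp [even_iff_two_dvd]

lemma f_two_even (t : List ℕ) (h : Odd t.sum) : ¬ Odd (f (2 :: t)) := by
  rw [odd_iff_cast, not_ne_iff, parity2 t.sum t rfl, if_neg (Nat.not_even_iff_odd.2 h)]

lemma f_two_odd_iff (t : List ℕ) (h : Even t.sum) : Odd (f (2 :: t)) ↔ Odd (f t) := by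
  rw [odd_iff_cast, odd_iff_cast, parity2 t.sum t rfl, if_pos h]

/-- branching of the Macdonald tree in the Young-Fibonacci graph. -/
theorem macdonald_tree_branching (n : ℕ) (w : List ℕ)
    (hw : ∀ x ∈ w, x = 1 ∨ x = 2) (hr : w.sum = n) (hodd : Odd (f w)) :
    (Even n → ∀ w' : List ℕ, (∀ x ∈ w', x = 1 ∨ x = 2) →
      ((w ∈ preds w' ∧ Odd (f w')) ↔ w' = 1 :: w)) ∧
    (Odd n → ∃! v : List ℕ, w = 1 :: v ∧ Odd (f v) ∧ v.sum = n - 1 ∧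
      ∀ w' : List ℕ, (∀ x ∈ w', x = 1 ∨ x = 2) →
        ((w ∈ preds w' ∧ Odd (f w')) ↔ (w' = 1 :: 1 :: v ∨ w' = 2 :: v))) := by
  constructor
  · intro hev w' hw'
    constructor
    · rintro ⟨hmem, hodd'⟩
      rcases w' with _ | ⟨x, t⟩
      · simp [preds] at hmem
      · rcases hw' x (by simp) with rfl | rfl
        · simp [preds] at hmem; rw [hmem]
        · exfalso
          have hs := preds_sum _ _ hmem
          simp at hs
          refine f_two_even t ?_ hodd'
          rw [Nat.odd_iff]; rw [Nat.even_iff] at hev; omega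
    · rintro rfl; exact ⟨by simp [preds], by rwa [f_one]⟩
  · intro hoddn
    rcases w with _ | ⟨x, v⟩
    · exfalso; simp at hr; subst hr; simp at hoddn
    have hx : x = 1 := by
      rcases hw x (by simp) with rfl | rfl
      · rfl
      · exfalso
        refine f_two_even v ?_ hodd
        simp at hr; rw [Nat.odd_iff] at hoddn ⊢; omega
    subst hx
    have hfv : Odd (f v) := by rwa [f_one] at hodd
    have hvs : v.sum = n - 1 := by simp at hr; omega
    have hvev : Even v.sum := by
      rw [Nat.even_iff]; rw [Nat.odd_iff] at hoddn; simp at hr; omega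
    refine ⟨v, ⟨rfl, hfv, hvs, ?_⟩, ?_⟩
    · intro w' hw'
      constructor
      · rintro ⟨hmem, hodd'⟩
        rcases w' with _ | ⟨y, t⟩
        · simp [preds] at hmem
        · rcases hw' y (by simp) with rfl | rfl
          · simp [preds] at hmem; left; rw [hmem]
          · right
            simp [preds] at hmem
            rcases hmem with h | ⟨u, hu, h⟩; simp_all
      · rintro (rfl | rfl)
        · exact ⟨by simp [preds], by rw [f_one, f_one]; exact hfv⟩
        · exact ⟨by simp [preds], (f_two_odd_iff v hvev).2 hfv⟩
    · rintro v' ⟨hv', -⟩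
      injection hv' with h1 h2
      exact h2.symm
end

section
/- Let p be a prime and write n = pm + r with 0 ≤ r < p. Let C_p(n) be the number of words over {1,2} of rank n whose f-value is coprime to p. Then C_p(n) = C_p(p)^m · C_p(r). -/
lemma fprod_nil : fprod [] = 1 := by simp [fprod]

lemma fprod_cons (a : ℕ) (t : List ℕ) :
    fprod (a :: t) = (if a = 2 then a + t.sum - 1 else 1) * fprod t := by
  unfold fprod
  rw [Finset.prod_filter, Finset.prod_filter]
  have h := Fin.prod_univ_succ
    (fun i : Fin (t.length + 1) => if (a :: t).get i = 2 then ((a :: t).drop i.1).sum - 1 else 1)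
  refine h.trans ?_
  simp

/-- all words over {1,2} of rank n -/
def words : ℕ → Finset (List ℕ)
  | 0 => {[]}
  | 1 => {[1]}
  | (n+2) => ((words (n+1)).image (fun t => 1 :: t)) ∪ ((words n).image (fun t => 2 :: t))

lemma mem_words : ∀ n w, w ∈ words n ↔ (∀ x ∈ w, x = 1 ∨ x = 2) ∧ w.sum = n := by
  intro n
  induction n using words.induct with
  | case1 =>
      intro w
      simp only [words, Finset.mem_singleton]
      constructor
      · rintro rfl; simp
      · rintro ⟨hb, hs⟩
        cases w with
        | nil => rfl
        | cons a t => have := hb a (by simp); simp at hs; omega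
  | case2 =>
      intro w
      simp only [words, Finset.mem_singleton]
      constructor
      · rintro rfl; simp
      · rintro ⟨hb, hs⟩
        cases w with
        | nil => simp at hs
        | cons a t =>
          have ha := hb a (by simp)
          simp at hs
          cases t with
          | nil => simp at hs; subst hs; rfl
          | cons b t' => have := hb b (by simp); simp at hs; omega
  | case3 n ih1 ih2 =>
      intro w
      simp only [words, Finset.mem_union, Finset.mem_image]
      constructor
      · rintro (⟨t, ht, rfl⟩ | ⟨t, ht, rfl⟩)
        · obtain ⟨hb, hs⟩ := (ih1 t).1 ht
          refine ⟨?_, by simp [hs]; omega⟩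
          intro x hx; rcases List.mem_cons.1 hx with rfl | hx; · left; rfl
          exact hb x hx
        · obtain ⟨hb, hs⟩ := (ih2 t).1 ht
          refine ⟨?_, by simp [hs]; omega⟩
          intro x hx; rcases List.mem_cons.1 hx with rfl | hx; · right; rfl
          exact hb x hx
      · rintro ⟨hb, hs⟩
        cases w with
        | nil => simp at hs
        | cons a t =>
          have hbt : ∀ x ∈ t, x = 1 ∨ x = 2 := fun x hx => hb x (by simp [hx])
          simp at hs
          rcases hb a (by simp) with rfl | rfl
          · left; exact ⟨t, (ih1 t).2 ⟨hbt, by omega⟩, rfl⟩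
          · right; exact ⟨t, (ih2 t).2 ⟨hbt, by omega⟩, rfl⟩

def Wc (p n : ℕ) : Finset (List ℕ) :=
  (words n).filter (fun w => Nat.Coprime (fprod w) p)

lemma mem_Wc {p n : ℕ} (w : List ℕ) :
    w ∈ Wc p n ↔ (∀ x ∈ w, x = 1 ∨ x = 2) ∧ w.sum = n ∧ Nat.Coprime (fprod w) p := by
  simp [Wc, Finset.mem_filter, mem_words, and_assoc]


/-- split off the maximal suffix of sum ≤ p -/
def cut (p : ℕ) : List ℕ → List ℕ × List ℕ
  | [] => ([], [])
  | a :: t => if (a :: t).sum ≤ p then ([], a :: t)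
      else (a :: (cut p t).1, (cut p t).2)

lemma cut_spec (p : ℕ) : ∀ w : List ℕ, (cut p w).1 ++ (cut p w).2 = w := by
  intro w
  induction w with
  | nil => rfl
  | cons a t ih =>
    rw [cut]
    split
    · rfl
    · simpa using ih

lemma cut_snd_le (p : ℕ) : ∀ w : List ℕ, (cut p w).2.sum ≤ p := by
  intro w
  induction w with
  | nil => simp [cut]
  | cons a t ih =>
    rw [cut]; split
    · simpa using ‹_›
    · exact ih

lemma cut_append (p : ℕ) : ∀ (u v : List ℕ), (∀ x ∈ u, 1 ≤ x) → v.sum = p →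
    cut p (u ++ v) = (u, v) := by
  intro u
  induction u with
  | nil =>
    intro v _ hv
    cases v with
    | nil => simp [cut]
    | cons a t =>
      simp only [List.nil_append]
      rw [cut, if_pos (le_of_eq hv)]
  | cons a u' ih =>
    intro v hu hv
    have ha : 1 ≤ a := hu a (by simp)
    have : ¬ ((a :: (u' ++ v)).sum ≤ p) := by
      simp [List.sum_append, hv]; omega
    simp only [List.cons_append]
    rw [cut, if_neg this, ih v (fun x hx => hu x (by simp [hx])) hv]

lemma fprod_append_modeq (p : ℕ) : ∀ (u v : List ℕ), v.sum = p →
    fprod (u ++ v) ≡ fprod u * fprod v [MOD p] := by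
  intro u
  induction u with
  | nil => intro v _; simpa [fprod_nil] using Nat.ModEq.refl (fprod v)
  | cons a u' ih =>
    intro v hv
    have h := ih v hv
    simp only [List.cons_append, fprod_cons]
    have hc : (if a = 2 then a + (u' ++ v).sum - 1 else 1)
        ≡ (if a = 2 then a + u'.sum - 1 else 1) [MOD p] := by
      split
      · simp only [List.sum_append, hv]
        have : a + (u'.sum + p) - 1 = (a + u'.sum - 1) + p := by omega
        rw [this]
        exact (Nat.modEq_iff_dvd' (by omega)).2 (by simp) |>.symm
      · rfl
    calc (if a = 2 then a + (u' ++ v).sum - 1 else 1) * fprod (u' ++ v)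
        ≡ (if a = 2 then a + u'.sum - 1 else 1) * (fprod u' * fprod v) [MOD p] :=
          hc.mul h
      _ = (if a = 2 then a + u'.sum - 1 else 1) * fprod u' * fprod v := by ring

lemma coprime_append {p : ℕ} (hp : p.Prime) {u v : List ℕ} (hv : v.sum = p) :
    Nat.Coprime (fprod (u ++ v)) p ↔
      Nat.Coprime (fprod u) p ∧ Nat.Coprime (fprod v) p := by
  have hmod := fprod_append_modeq p u v hv
  have hdvd : p ∣ fprod (u ++ v) ↔ p ∣ fprod u * fprod v :=
    (Nat.ModEq.dvd_iff hmod dvd_rfl)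
  have key : ∀ x : ℕ, Nat.Coprime x p ↔ ¬ p ∣ x := fun x => by
    rw [Nat.coprime_comm]; exact hp.coprime_iff_not_dvd
  rw [key, key, key, hdvd, hp.dvd_mul]
  tauto

lemma cut_snd_sum {p : ℕ} (hp : 2 ≤ p) : ∀ w : List ℕ,
    (∀ x ∈ w, x = 1 ∨ x = 2) → p ≤ w.sum → Nat.Coprime (fprod w) p →
    (cut p w).2.sum = p := by
  intro w
  induction w with
  | nil => intro _ hs _; simp at hs; omega
  | cons a t ih =>
    intro hb hs hc
    by_cases h : (a :: t).sum ≤ p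
    · rw [cut, if_pos h]; show (a :: t).sum = p; omega
    · rw [cut, if_neg h]
      have hbt : ∀ x ∈ t, x = 1 ∨ x = 2 := fun x hx => hb x (by simp [hx])
      have hct : Nat.Coprime (fprod t) p := by
        rw [fprod_cons] at hc
        exact Nat.Coprime.coprime_dvd_left (dvd_mul_left _ _) hc
      have hts : p ≤ t.sum := by
        rcases hb a (by simp) with rfl | rfl
        · simp at h; omega
        · simp at h
          rcases (by omega : p ≤ t.sum ∨ t.sum + 1 = p) with h' | h'
          · exact h'
          · exfalso
            rw [fprod_cons, if_pos rfl] at hc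
            have : 2 + t.sum - 1 = p := by omega
            rw [this] at hc
            have := Nat.Coprime.coprime_dvd_left (dvd_mul_right p (fprod t)) hc
            have h2 := this
            unfold Nat.Coprime at h2
            rw [Nat.gcd_self] at h2
            omega
      exact ih hbt hts hct

lemma card_step {p : ℕ} (hp : p.Prime) {n : ℕ} (hn : p ≤ n) :
    (Wc p n).card = (Wc p (n - p)).card * (Wc p p).card := by
  rw [← Finset.card_product]
  apply Finset.card_bij' (fun w _ => cut p w)
    (fun uv _ => uv.1 ++ uv.2)
  · -- maps to
    intro w hw
    obtain ⟨hb, hs, hc⟩ := (mem_Wc w).1 hw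
    have hv : (cut p w).2.sum = p := cut_snd_sum hp.two_le w hb (hs ▸ hn) hc
    have hsp : (cut p w).1 ++ (cut p w).2 = w := cut_spec p w
    have hb1 : ∀ x ∈ (cut p w).1, x = 1 ∨ x = 2 := fun x hx =>
      hb x (by rw [← hsp]; exact List.mem_append_left _ hx)
    have hb2 : ∀ x ∈ (cut p w).2, x = 1 ∨ x = 2 := fun x hx =>
      hb x (by rw [← hsp]; exact List.mem_append_right _ hx)
    have hsum : (cut p w).1.sum + (cut p w).2.sum = n := by
      rw [← List.sum_append, hsp, hs]
    have hcop : Nat.Coprime (fprod (cut p w).1) p ∧ Nat.Coprime (fprod (cut p w).2) p := by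
      rw [← coprime_append hp hv, hsp]; exact hc
    rw [Finset.mem_product]
    exact ⟨(mem_Wc _).2 ⟨hb1, by omega, hcop.1⟩, (mem_Wc _).2 ⟨hb2, hv, hcop.2⟩⟩
  · -- inverse maps to
    intro uv huv
    rw [Finset.mem_product] at huv
    obtain ⟨hb1, hs1, hc1⟩ := (mem_Wc _).1 huv.1
    obtain ⟨hb2, hs2, hc2⟩ := (mem_Wc _).1 huv.2
    refine (mem_Wc _).2 ⟨?_, ?_, ?_⟩
    · intro x hx
      rcases List.mem_append.1 hx with hx | hx
      exacts [hb1 x hx, hb2 x hx]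
    · rw [List.sum_append, hs1, hs2]; omega
    · exact (coprime_append hp hs2).2 ⟨hc1, hc2⟩
  · intro w hw
    exact cut_spec p w
  · intro uv huv
    rw [Finset.mem_product] at huv
    obtain ⟨hb1, hs1, hc1⟩ := (mem_Wc _).1 huv.1
    obtain ⟨hb2, hs2, hc2⟩ := (mem_Wc _).1 huv.2
    have : ∀ x ∈ uv.1, 1 ≤ x := fun x hx => by rcases hb1 x hx with rfl | rfl <;> omega
    rw [cut_append p uv.1 uv.2 this hs2]

lemma Wc_card {p : ℕ} (hp : p.Prime) (m r : ℕ) (hr : r < p) :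
    (Wc p (p * m + r)).card = (Wc p p).card ^ m * (Wc p r).card := by
  induction m with
  | zero => simp
  | succ m ih =>
    have h1 : p ≤ p * (m + 1) + r := by nlinarith [hp.two_le]
    have h2 : p * (m + 1) + r - p = p * m + r := by ring_nf; omega
    rw [card_step hp h1, h2, ih]
    ring

/-- writing `n = p·m + r` with `0 ≤ r < p`, the number `C_p(n)` of
words of rank `n` with `f`-value coprime to `p` satisfies `C_p(n) = C_p(p)^m · C_p(r)`. -/
theorem coprime_count_multiplicative (p : ℕ) (hp : p.Prime) (n m r : ℕ)
    (hn : n = p * m + r) (hr : r < p) (A B C : Finset (List ℕ))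
    (hA : ∀ w : List ℕ, w ∈ A ↔ (∀ x ∈ w, x = 1 ∨ x = 2) ∧ w.sum = n ∧ Nat.Coprime (fprod w) p)
    (hB : ∀ w : List ℕ, w ∈ B ↔ (∀ x ∈ w, x = 1 ∨ x = 2) ∧ w.sum = p ∧ Nat.Coprime (fprod w) p)
    (hC : ∀ w : List ℕ, w ∈ C ↔ (∀ x ∈ w, x = 1 ∨ x = 2) ∧ w.sum = r ∧ Nat.Coprime (fprod w) p) :
    A.card = B.card ^ m * C.card := by
  have hA' : A = Wc p n := Finset.ext fun w => by rw [hA, mem_Wc]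
  have hB' : B = Wc p p := Finset.ext fun w => by rw [hB, mem_Wc]
  have hC' : C = Wc p r := Finset.ext fun w => by rw [hC, mem_Wc]
  rw [hA', hB', hC', hn]
  exact Wc_card hp m r hr
end
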